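/- Let α > 0 and halt, gen ∈ (0,1) satisfy (1−gen) ≤ e^α·halt and gen ≤ e^α·(1−halt). Then for all natural numbers n, ℓ, m with n ≤ ℓ < m: (1−halt)^n·(1−gen)·gen^{ℓ−n} ≤ exp(α·(m − n))·halt·(1−halt)^ℓ. -/
import Mathlib


/-- Case 4 of the length-indistinguishability proof: generation probability versus
halting probability when `n ≤ ℓ < m`. -/
theorem seq_cldp_case4 (α halt gen : ℝ) (hα : 0 < α)
    (hhalt : halt ∈ Set.Ioo (0 : ℝ) 1) (hgen : gen ∈ Set.Ioo (0 : ℝ) 1)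
    (h4 : 1 - gen ≤ Real.exp α * halt)
    (h1 : gen ≤ Real.exp α * (1 - halt))
    (n ℓ m : ℕ) (hnℓ : n ≤ ℓ) (hℓm : ℓ < m) :
    (1 - halt) ^ n * (1 - gen) * gen ^ (ℓ - n)
      ≤ Real.exp (α * ((m : ℝ) - (n : ℝ))) * (halt * (1 - halt) ^ ℓ) := by
  obtain ⟨hh0, hh1⟩ := hhalt
  obtain ⟨hg0, hg1⟩ := hgen
  have hhalt1 : (0:ℝ) < 1 - halt := by linarith
  have hpow : gen ^ (ℓ - n) ≤ (Real.exp α * (1 - halt)) ^ (ℓ - n) :=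
    pow_le_pow_left₀ hg0.le h1 _
  have h1g : (0:ℝ) ≤ 1 - gen := by linarith
  have step1 : (1 - halt) ^ n * (1 - gen) * gen ^ (ℓ - n)
      ≤ (1 - halt) ^ n * (Real.exp α * halt) * ((Real.exp α * (1 - halt)) ^ (ℓ - n)) := by
    apply mul_le_mul
    · exact mul_le_mul_of_nonneg_left h4 (pow_nonneg hhalt1.le n)
    · exact hpow
    · exact pow_nonneg hg0.le _
    · positivity
  refine step1.trans ?_
  have hsplit : ℓ = n + (ℓ - n) := (Nat.add_sub_cancel' hnℓ).symm
  have key : (1 - halt) ^ n * (Real.exp α * halt) * ((Real.exp α * (1 - halt)) ^ (ℓ - n))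
      = Real.exp (α * ((ℓ - n : ℕ) + 1)) * (halt * (1 - halt) ^ ℓ) := by
    rw [mul_pow, ← Real.exp_nat_mul]
    rw [show ((1:ℝ) - halt) ^ ℓ = (1 - halt) ^ n * (1 - halt) ^ (ℓ - n) by
      rw [← pow_add, ← hsplit]]
    rw [mul_add, mul_one, Real.exp_add]
    ring
  rw [key]
  have hle : ((ℓ - n : ℕ) : ℝ) + 1 ≤ (m : ℝ) - n := by
    rw [Nat.cast_sub hnℓ]
    have hm : (ℓ:ℝ) + 1 ≤ m := by exact_mod_cast hℓm
    linarith
  have : Real.exp (α * ((ℓ - n : ℕ) + 1)) ≤ Real.exp (α * ((m:ℝ) - n)) :=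
    Real.exp_le_exp.mpr (mul_le_mul_of_nonneg_left hle hα.le)
  exact mul_le_mul_of_nonneg_right this (by positivity)
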